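/- Let s ≥ 1, a ≥ 1 and y ≥ 1. Let g : ℕ → (Fin s → ℤ) be an addition-machine computation with s registers whose initial values satisfy |g 0 i| ≤ 2^a for every i, and in which every constant used has absolute value at most 2^a. If after t steps some register i satisfies |g t i| ≥ 2^(a·y), then t ≥ a·(y − 1). (This is the counting core of the negative answer to Floyd and Knuth's Open Problem (3) under Definition (a) of the little-oh calculus: starting from the input x = 2^(m/(y+1)), producing the output x^y = 2^(m·y/(y+1)) requires at least m·(y−1)/(y+1) additions.) -/

import Mathlib

/-- `g` is an addition-machine computation with `s` registers in which every
integer constant used has absolute value at most `M`: at each step `t`, one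
register `i` is updated to the sum or difference of two registers, or to a
register plus or minus a constant `c` with `|c| ≤ M`, and all other registers
are unchanged. -/
def IsAdditionMachineComputation (s : ℕ) (M : ℤ) (g : ℕ → Fin s → ℤ) : Prop :=
  ∀ t : ℕ, ∃ i : Fin s,
    (∀ l : Fin s, l ≠ i → g (t + 1) l = g t l) ∧
    ((∃ j k : Fin s, g (t + 1) i = g t j + g t k ∨ g (t + 1) i = g t j - g t k) ∨
     (∃ (j : Fin s) (c : ℤ), |c| ≤ M ∧
        (g (t + 1) i = g t j + c ∨ g (t + 1) i = g t j - c)))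

theorem addition_machine_powering_lower_bound
    (s : ℕ) (hs : 1 ≤ s) (a : ℕ) (ha : 1 ≤ a) (y : ℕ) (hy : 1 ≤ y)
    (g : ℕ → Fin s → ℤ)
    (hg : IsAdditionMachineComputation s ((2 : ℤ) ^ a) g)
    (h0 : ∀ i : Fin s, |g 0 i| ≤ (2 : ℤ) ^ a)
    (t : ℕ) (i : Fin s)
    (ht : (2 : ℤ) ^ (a * y) ≤ |g t i|) :
    a * (y - 1) ≤ t := by
  have key : ∀ u : ℕ, ∀ l : Fin s, |g u l| ≤ (2 : ℤ) ^ (a + u) := by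
    intro u
    induction u with
    | zero => simpa using h0
    | succ n ih =>
      intro l
      obtain ⟨i0, hother, hstep⟩ := hg n
      have hmono : (2 : ℤ) ^ (a + n) ≤ (2 : ℤ) ^ (a + (n + 1)) :=
        pow_le_pow_right₀ (by norm_num) (by omega)
      by_cases hl : l = i0
      · subst hl
        have h2 : (2 : ℤ) ^ (a + (n + 1)) = 2 ^ (a + n) + 2 ^ (a + n) := by
          rw [show a + (n + 1) = (a + n) + 1 by omega, pow_succ]; ring
        have hc : (2 : ℤ) ^ a ≤ 2 ^ (a + n) :=
          pow_le_pow_right₀ (by norm_num) (by omega)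
        rcases hstep with ⟨j, k, h | h⟩ | ⟨j, c, hcle, h | h⟩ <;> rw [h, h2] <;>
          [ (calc |g n j + g n k| ≤ |g n j| + |g n k| := abs_add_le _ _
              _ ≤ _ := add_le_add (ih j) (ih k));
            (calc |g n j - g n k| ≤ |g n j| + |g n k| := abs_sub _ _
              _ ≤ _ := add_le_add (ih j) (ih k));
            (calc |g n j + c| ≤ |g n j| + |c| := abs_add_le _ _
              _ ≤ _ := add_le_add (ih j) (le_trans hcle hc));
            (calc |g n j - c| ≤ |g n j| + |c| := abs_sub _ _
              _ ≤ _ := add_le_add (ih j) (le_trans hcle hc))]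
      · rw [hother l hl]
        exact le_trans (ih l) hmono
  have h1 : (2 : ℤ) ^ (a * y) ≤ (2 : ℤ) ^ (a + t) := le_trans ht (key t i)
  have h2 : a * y ≤ a + t :=
    (pow_le_pow_iff_right₀ (by norm_num : (1:ℤ) < 2)).mp h1
  obtain ⟨y', rfl⟩ : ∃ y', y = y' + 1 := ⟨y - 1, by omega⟩
  have : a * (y' + 1) = a * y' + a := by ring
  simp only [Nat.add_sub_cancel]
  omega
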